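/- For a given state x, if π is a policy with J_π(x) < +∞, then lim_{n→∞} E^π_x[J^{*+}(x_n)] = 0 and lim_{n→∞} E^π_x[J^{*-}(x_n)] = 0. -/

import Mathlib

/-!
Common framework: countable-state/countable-control total-cost MDPs under the
General Convergence (GC) condition, following H. Yu, "On Convergence of Value
Iteration for a Class of Total Cost Markov Decision Processes".

States `S` and controls `C` are countable types; `U x` is the nonempty set of
feasible controls at `x`; `g x u ∈ (-∞, +∞]` is the one-stage cost (an `EReal`
that is never `⊥` on feasible pairs); `q x u x'` are transition probabilities.

A policy is represented by its conditional control distributions given the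
(reversed) history of past (state, control) pairs and the current state.
Expectations are computed by explicit countable sums, splitting every
extended-real quantity into its positive and negative parts (computed in
`ℝ≥0∞`) and recombining with the convention `∞ - ∞ = ∞`.
-/

open scoped ENNReal Classical
open Filter

noncomputable section

namespace GCMDP

/-- The positive part of an extended real, as an element of `ℝ≥0∞`. -/
def ePos (a : EReal) : ℝ≥0∞ := if a = ⊤ then ⊤ else ENNReal.ofReal a.toReal

/-- Recombine a positive part `P` and a negative part `N` into an extended real,
with the convention `∞ - ∞ = ∞`. -/
def signedSum (P N : ℝ≥0∞) : EReal := if P = ⊤ then ⊤ else (P : EReal) - (N : EReal)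

variable {S C : Type}

/-- A (randomized, history-dependent) policy: to each reversed list of past
(state, control) pairs and each current state it assigns a mass function on
controls. -/
def Policy (S C : Type) : Type := List (S × C) → S → C → ℝ≥0∞

/-- A policy is valid for the control constraint `U` if each of its conditional
distributions is a probability distribution concentrated on the feasible set. -/
def IsPolicy (U : S → Set C) (π : Policy S C) : Prop :=
  ∀ (h : List (S × C)) (x : S), (∑' u : C, π h x u) = 1 ∧ ∀ u : C, π h x u ≠ 0 → u ∈ U x

/-- A policy is nonrandomized if each of its conditional distributions is a
point mass. -/
def Nonrandomized (π : Policy S C) : Prop :=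
  ∀ (h : List (S × C)) (x : S), ∃ u : C, ∀ u' : C, π h x u' = if u' = u then 1 else 0

/-- The initial state recorded in a reversed history `h` with current state `x`. -/
def initOf (h : List (S × C)) (x : S) : S := ((h.getLast?).map Prod.fst).getD x

/-- A policy is semi-Markov if its decision at time `k` depends on the history
only through the time `k`, the initial state and the current state. -/
def IsSemiMarkov (π : Policy S C) : Prop :=
  ∀ (h h' : List (S × C)) (x : S), h.length = h'.length → initOf h x = initOf h' x →
    π h x = π h' x

/-- A policy is Markov if its decision at time `k` depends on the history only
through the time `k` and the current state. -/
def IsMarkov (π : Policy S C) : Prop :=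
  ∀ (h h' : List (S × C)) (x : S), h.length = h'.length → π h x = π h' x

/-- A policy is stationary if its decision depends only on the current state. -/
def IsStationary (π : Policy S C) : Prop :=
  ∀ (h h' : List (S × C)) (x : S), π h x = π h' x

/-- The stationary policy determined by a one-step decision rule `μ`. -/
def toPolicy (μ : S → C → ℝ≥0∞) : Policy S C := fun _ x u => μ x u

/-- Probability that, starting from `x₀` and following policy `π`, the first
transitions produce the reversed history `h` and current state `y`. -/
def histProb (q : S → C → S → ℝ≥0∞) (π : Policy S C) (x₀ : S) :
    List (S × C) → S → ℝ≥0∞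
  | [], y => if y = x₀ then 1 else 0
  | (z, u) :: h, y => histProb q π x₀ h z * π h z u * q z u y

/-- Marginal distribution of the state `x_n` at time `n` under policy `π`
started at `x₀`. -/
def sDist (q : S → C → S → ℝ≥0∞) (π : Policy S C) (x₀ : S) (n : ℕ) (y : S) : ℝ≥0∞ :=
  ∑' h : {l : List (S × C) // l.length = n}, histProb q π x₀ h.1 y

/-- Joint distribution of the state-control pair `(x_n, u_n)` at time `n`. -/
def saDist (q : S → C → S → ℝ≥0∞) (π : Policy S C) (x₀ : S) (n : ℕ) (y : S) (u : C) : ℝ≥0∞ :=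
  ∑' h : {l : List (S × C) // l.length = n}, histProb q π x₀ h.1 y * π h.1 y u

/-- Expectation `E^π_{x₀}[f(x_n, u_n)]` of a nonnegative cost. -/
def costAt (q : S → C → S → ℝ≥0∞) (π : Policy S C) (x₀ : S) (n : ℕ)
    (f : S → C → ℝ≥0∞) : ℝ≥0∞ :=
  ∑' y : S, ∑' u : C, saDist q π x₀ n y u * f y u

/-- Positive part `g₊` of the one-stage cost. -/
def gPos (g : S → C → EReal) (x : S) (u : C) : ℝ≥0∞ := ePos (g x u)

/-- Negative part `g₋` of the one-stage cost. -/
def gNeg (g : S → C → EReal) (x : S) (u : C) : ℝ≥0∞ := ePos (-(g x u))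

/-- `J_π^+(x) = E^π_x[∑_k g₊(x_k,u_k)]`. -/
def Jplus (q : S → C → S → ℝ≥0∞) (g : S → C → EReal) (π : Policy S C) (x : S) : ℝ≥0∞ :=
  ∑' n : ℕ, costAt q π x n (gPos g)

/-- `J_π^-(x) = E^π_x[∑_k g₋(x_k,u_k)]`. -/
def Jminus (q : S → C → S → ℝ≥0∞) (g : S → C → EReal) (π : Policy S C) (x : S) : ℝ≥0∞ :=
  ∑' n : ℕ, costAt q π x n (gNeg g)

/-- The total cost `J_π(x) = J_π^+(x) - J_π^-(x)` of a policy. -/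
def Jpol (q : S → C → S → ℝ≥0∞) (g : S → C → EReal) (π : Policy S C) (x : S) : EReal :=
  signedSum (Jplus q g π x) (Jminus q g π x)

/-- The general convergence (GC) condition: `sup_π J_π^-(x) < ∞` for all `x`. -/
def GC (U : S → Set C) (q : S → C → S → ℝ≥0∞) (g : S → C → EReal) : Prop :=
  ∀ x : S, (⨆ π ∈ {π' : Policy S C | IsPolicy U π'}, Jminus q g π x) ≠ ⊤

/-- The optimal cost function `J*(x) = inf_π J_π(x)`. -/
def Jstar (U : S → Set C) (q : S → C → S → ℝ≥0∞) (g : S → C → EReal) (x : S) : EReal :=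
  ⨅ π ∈ {π' : Policy S C | IsPolicy U π'}, Jpol q g π x

/-- `J^{*+}(x) = inf_π J_π^+(x)`. -/
def JstarPlus (U : S → Set C) (q : S → C → S → ℝ≥0∞) (g : S → C → EReal) (x : S) : ℝ≥0∞ :=
  ⨅ π ∈ {π' : Policy S C | IsPolicy U π'}, Jplus q g π x

/-- `J^{*-}(x) = inf_π J_π^-(x)`. -/
def JstarMinus (U : S → Set C) (q : S → C → S → ℝ≥0∞) (g : S → C → EReal) (x : S) : ℝ≥0∞ :=
  ⨅ π ∈ {π' : Policy S C | IsPolicy U π'}, Jminus q g π x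

/-- The general one-stage dynamic programming operator with one-stage cost `c`:
`(opT c J)(x) = inf_{u ∈ U(x)} { c(x,u) + ∑_{x'} J(x') q(x'|x,u) }`, where the
bracket is evaluated by separating positive and negative parts, with the
convention `∞ - ∞ = ∞`. -/
def opT (U : S → Set C) (q : S → C → S → ℝ≥0∞) (c : S → C → EReal)
    (J : S → EReal) (x : S) : EReal :=
  ⨅ u ∈ U x,
    signedSum (ePos (c x u) + ∑' x' : S, q x u x' * ePos (J x'))
      (ePos (-(c x u)) + ∑' x' : S, q x u x' * ePos (-(J x')))

/-- The dynamic programming operator `T` of the total cost problem. -/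
def Top (U : S → Set C) (q : S → C → S → ℝ≥0∞) (g : S → C → EReal) :
    (S → EReal) → S → EReal :=
  opT U q g

/-- The operator `T₊` associated with the positive part `g₊` of the cost. -/
def TopPlus (U : S → Set C) (q : S → C → S → ℝ≥0∞) (g : S → C → EReal) :
    (S → EReal) → S → EReal :=
  opT U q (fun x u => max (g x u) 0)

/-- The operator `T₋` associated with the (negated) negative part `-g₋` of the cost. -/
def TopMinus (U : S → Set C) (q : S → C → S → ℝ≥0∞) (g : S → C → EReal) :
    (S → EReal) → S → EReal :=
  opT U q (fun x u => min (g x u) 0)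

/-- The cost-free operator `T₀`. -/
def TopZero (U : S → Set C) (q : S → C → S → ℝ≥0∞) :
    (S → EReal) → S → EReal :=
  opT U q (fun _ _ => 0)

/-- The monotone-increasing modification `T̃(J) = max{J, T(J)}` of `T`. -/
def Ttil (U : S → Set C) (q : S → C → S → ℝ≥0∞) (g : S → C → EReal)
    (J : S → EReal) (x : S) : EReal :=
  max (J x) (Top U q g J x)

/-- The operator `T_μ` associated with a stationary decision rule `μ`. -/
def Tmu (q : S → C → S → ℝ≥0∞) (g : S → C → EReal) (μ : S → C → ℝ≥0∞)
    (J : S → EReal) (x : S) : EReal :=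
  signedSum (∑' u : C, μ x u * (ePos (g x u) + ∑' x' : S, q x u x' * ePos (J x')))
    (∑' u : C, μ x u * (ePos (-(g x u)) + ∑' x' : S, q x u x' * ePos (-(J x'))))

/-- Expectation `E^π_{x₀}[J(x_n)]` of an extended-real function of the state at
time `n` (positive and negative parts combined with the convention `∞-∞=∞`). -/
def expState (q : S → C → S → ℝ≥0∞) (π : Policy S C) (x₀ : S) (n : ℕ)
    (J : S → EReal) : EReal :=
  signedSum (∑' y : S, sDist q π x₀ n y * ePos (J y))
    (∑' y : S, sDist q π x₀ n y * ePos (-(J y)))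

/-- The expected tail cost `E^π_{x₀}[∑_{k ≥ n} g(x_k, u_k)]`. -/
def tailCost (q : S → C → S → ℝ≥0∞) (g : S → C → EReal) (π : Policy S C)
    (x₀ : S) (n : ℕ) : EReal :=
  signedSum (∑' k : ℕ, costAt q π x₀ (n + k) (gPos g))
    (∑' k : ℕ, costAt q π x₀ (n + k) (gNeg g))

/-- Membership in the class `A₀(S)`: functions nowhere `-∞` such that
`inf_{n ≥ 1} T₀ⁿ(min{J, 0})` is nowhere `-∞`. -/
def MemA0 (U : S → Set C) (q : S → C → S → ℝ≥0∞) (J : S → EReal) : Prop :=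
  (∀ x : S, J x ≠ ⊥) ∧
    ∀ x : S, (⨅ n : ℕ, (TopZero U q)^[n + 1] (fun y => min (J y) 0) x) ≠ ⊥


/-! ### Auxiliary lemmas for Statement 9 -/

/-- The shifted policy: behave like `π` with the fixed (reversed) history `h0` prepended. -/
def shift (π : Policy S C) (h0 : List (S × C)) : Policy S C := fun h x u => π (h ++ h0) x u

lemma isPolicy_shift {U : S → Set C} {π : Policy S C} (hπ : IsPolicy U π)
    (h0 : List (S × C)) : IsPolicy U (shift π h0) := fun h x => hπ (h ++ h0) x

lemma initOf_cons (w : S) (u : C) (h : List (S × C)) (y : S) :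
    initOf ((w, u) :: h) y = initOf h w := by
  cases h with
  | nil => simp [initOf]
  | cons p t =>
    have h : (p :: t).getLast? = some ((p :: t).getLast (by simp)) :=
      List.getLast?_eq_getLast (by simp)
    simp [initOf, List.getLast?_cons_cons, h]

lemma histProb_eq_zero {q : S → C → S → ℝ≥0∞} {π : Policy S C} {z : S}
    (l : List (S × C)) (y : S) (hne : initOf l y ≠ z) : histProb q π z l y = 0 := by
  induction l generalizing y with
  | nil =>
    simp only [initOf, List.getLast?_nil, Option.map_none, Option.getD_none] at hne
    simp [histProb, hne]
  | cons p t ih =>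
    obtain ⟨w, u⟩ := p
    rw [initOf_cons] at hne
    simp [histProb, ih w hne]

lemma histProb_append (q : S → C → S → ℝ≥0∞) (π : Policy S C) (x : S)
    (l₁ l₂ : List (S × C)) (y : S) :
    histProb q π x (l₁ ++ l₂) y =
      histProb q π x l₂ (initOf l₁ y) *
        histProb q (shift π l₂) (initOf l₁ y) l₁ y := by
  induction l₁ generalizing y with
  | nil => simp [histProb, initOf]
  | cons p t ih =>
    obtain ⟨w, u⟩ := p
    rw [List.cons_append, initOf_cons]
    show histProb q π x (t ++ l₂) w * π (t ++ l₂) w u * q w u y = _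
    rw [ih w]
    show _ = histProb q π x l₂ (initOf t w) *
      (histProb q (shift π l₂) (initOf t w) t w * shift π l₂ t w u * q w u y)
    show _ = histProb q π x l₂ (initOf t w) *
      (histProb q (shift π l₂) (initOf t w) t w * π (t ++ l₂) w u * q w u y)
    ring

/-- Chapman–Kolmogorov style factorization of the history probabilities. -/
lemma tsum_histProb_mul (q : S → C → S → ℝ≥0∞) (π : Policy S C) (x : S)
    (l₁ l₂ : List (S × C)) (y : S) :
    (∑' z : S, histProb q π x l₂ z * histProb q (shift π l₂) z l₁ y)
      = histProb q π x (l₁ ++ l₂) y := by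
  rw [histProb_append]
  refine tsum_eq_single (initOf l₁ y) fun z hz => ?_
  rw [histProb_eq_zero l₁ y (Ne.symm hz), mul_zero]

/-- Splitting a list of length `k + n` into its first `k` and last `n` entries. -/
def splitEquiv (α : Type) (k n : ℕ) :
    ({l : List α // l.length = k} × {l : List α // l.length = n}) ≃
      {l : List α // l.length = k + n} where
  toFun p := ⟨p.1.1 ++ p.2.1, by simp [p.1.2, p.2.2]⟩
  invFun l := (⟨l.1.take k, by rw [List.length_take, l.2]; omega⟩,
    ⟨l.1.drop k, by rw [List.length_drop, l.2]; omega⟩)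
  left_inv := by
    rintro ⟨⟨a, ha⟩, ⟨b, hb⟩⟩
    simp [List.take_left' ha, List.drop_left' ha]
  right_inv := by
    rintro ⟨l, hl⟩
    simp

lemma costAt_eq (q : S → C → S → ℝ≥0∞) (π : Policy S C) (x : S) (m : ℕ)
    (f : S → C → ℝ≥0∞) :
    costAt q π x m f = ∑' (l : {l : List (S × C) // l.length = m}) (y : S) (u : C),
      histProb q π x l.1 y * π l.1 y u * f y u := by
  unfold costAt saDist
  calc (∑' (y : S) (u : C),
        (∑' l : {l : List (S × C) // l.length = m}, histProb q π x l.1 y * π l.1 y u)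
          * f y u)
      = ∑' (y : S) (u : C) (l : {l : List (S × C) // l.length = m}),
          histProb q π x l.1 y * π l.1 y u * f y u := by
        simp_rw [← ENNReal.tsum_mul_right]
    _ = ∑' (y : S) (l : {l : List (S × C) // l.length = m}) (u : C),
          histProb q π x l.1 y * π l.1 y u * f y u := by
        exact tsum_congr fun y => ENNReal.tsum_comm
    _ = _ := ENNReal.tsum_comm

lemma costAt_decomp (q : S → C → S → ℝ≥0∞) (π : Policy S C) (x : S)
    (f : S → C → ℝ≥0∞) (k n : ℕ) :
    costAt q π x (k + n) f =
      ∑' (l₂ : {l : List (S × C) // l.length = n}) (z : S),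
        histProb q π x l₂.1 z * costAt q (shift π l₂.1) z k f := by
  have hR : ∀ (l₂ : {l : List (S × C) // l.length = n}),
      (∑' z : S, histProb q π x l₂.1 z * costAt q (shift π l₂.1) z k f)
        = ∑' (l₁ : {l : List (S × C) // l.length = k}) (y : S) (u : C),
            histProb q π x (l₁.1 ++ l₂.1) y * π (l₁.1 ++ l₂.1) y u * f y u := by
    intro l₂
    calc (∑' z : S, histProb q π x l₂.1 z * costAt q (shift π l₂.1) z k f)
        = ∑' (z : S) (l₁ : {l : List (S × C) // l.length = k}) (y : S) (u : C),
            histProb q π x l₂.1 z *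
              (histProb q (shift π l₂.1) z l₁.1 y * π (l₁.1 ++ l₂.1) y u * f y u) := by
          refine tsum_congr fun z => ?_
          rw [costAt_eq]
          simp_rw [← ENNReal.tsum_mul_left]
          rfl
      _ = ∑' (l₁ : {l : List (S × C) // l.length = k}) (z : S) (y : S) (u : C),
            histProb q π x l₂.1 z *
              (histProb q (shift π l₂.1) z l₁.1 y * π (l₁.1 ++ l₂.1) y u * f y u) :=
          ENNReal.tsum_comm
      _ = ∑' (l₁ : {l : List (S × C) // l.length = k}) (y : S) (z : S) (u : C),
            histProb q π x l₂.1 z *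
              (histProb q (shift π l₂.1) z l₁.1 y * π (l₁.1 ++ l₂.1) y u * f y u) :=
          tsum_congr fun l₁ => ENNReal.tsum_comm
      _ = ∑' (l₁ : {l : List (S × C) // l.length = k}) (y : S) (u : C) (z : S),
            histProb q π x l₂.1 z *
              (histProb q (shift π l₂.1) z l₁.1 y * π (l₁.1 ++ l₂.1) y u * f y u) :=
          tsum_congr fun l₁ => tsum_congr fun y => ENNReal.tsum_comm
      _ = ∑' (l₁ : {l : List (S × C) // l.length = k}) (y : S) (u : C),
            histProb q π x (l₁.1 ++ l₂.1) y * π (l₁.1 ++ l₂.1) y u * f y u := by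
          refine tsum_congr fun l₁ => tsum_congr fun y => tsum_congr fun u => ?_
          calc (∑' z : S, histProb q π x l₂.1 z *
                (histProb q (shift π l₂.1) z l₁.1 y * π (l₁.1 ++ l₂.1) y u * f y u))
              = (∑' z : S, histProb q π x l₂.1 z * histProb q (shift π l₂.1) z l₁.1 y)
                  * (π (l₁.1 ++ l₂.1) y u * f y u) := by
                rw [← ENNReal.tsum_mul_right]
                exact tsum_congr fun z => by ring
            _ = _ := by rw [tsum_histProb_mul]; ring
  calc costAt q π x (k + n) f
      = ∑' (l : {l : List (S × C) // l.length = k + n}) (y : S) (u : C),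
          histProb q π x l.1 y * π l.1 y u * f y u := costAt_eq q π x (k + n) f
    _ = ∑' (p : {l : List (S × C) // l.length = k} × {l : List (S × C) // l.length = n})
          (y : S) (u : C),
          histProb q π x (p.1.1 ++ p.2.1) y * π (p.1.1 ++ p.2.1) y u * f y u :=
        ((splitEquiv (S × C) k n).tsum_eq _).symm
    _ = ∑' (l₁ : {l : List (S × C) // l.length = k})
          (l₂ : {l : List (S × C) // l.length = n}) (y : S) (u : C),
          histProb q π x (l₁.1 ++ l₂.1) y * π (l₁.1 ++ l₂.1) y u * f y u :=
        ENNReal.tsum_prod (f := fun (l₁ : {l : List (S × C) // l.length = k})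
            (l₂ : {l : List (S × C) // l.length = n}) => ∑' (y : S) (u : C),
          histProb q π x (l₁.1 ++ l₂.1) y * π (l₁.1 ++ l₂.1) y u * f y u)
    _ = ∑' (l₂ : {l : List (S × C) // l.length = n})
          (l₁ : {l : List (S × C) // l.length = k}) (y : S) (u : C),
          histProb q π x (l₁.1 ++ l₂.1) y * π (l₁.1 ++ l₂.1) y u * f y u :=
        ENNReal.tsum_comm
    _ = _ := by exact (tsum_congr fun l₂ => (hR l₂).symm)

/-- Tail-cost decomposition: the expected cost from time `n` on equals the
expected (over histories of length `n`) total cost of the shifted policies. -/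
lemma tail_decomp (q : S → C → S → ℝ≥0∞) (π : Policy S C) (x : S)
    (f : S → C → ℝ≥0∞) (n : ℕ) :
    (∑' k : ℕ, costAt q π x (n + k) f) =
      ∑' (l₂ : {l : List (S × C) // l.length = n}) (z : S),
        histProb q π x l₂.1 z * (∑' k : ℕ, costAt q (shift π l₂.1) z k f) := by
  calc (∑' k : ℕ, costAt q π x (n + k) f)
      = ∑' (k : ℕ) (l₂ : {l : List (S × C) // l.length = n}) (z : S),
          histProb q π x l₂.1 z * costAt q (shift π l₂.1) z k f := by
        refine tsum_congr fun k => ?_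
        rw [add_comm n k, costAt_decomp]
    _ = ∑' (l₂ : {l : List (S × C) // l.length = n}) (k : ℕ) (z : S),
          histProb q π x l₂.1 z * costAt q (shift π l₂.1) z k f := ENNReal.tsum_comm
    _ = ∑' (l₂ : {l : List (S × C) // l.length = n}) (z : S) (k : ℕ),
          histProb q π x l₂.1 z * costAt q (shift π l₂.1) z k f :=
        tsum_congr fun l₂ => ENNReal.tsum_comm
    _ = _ := by simp_rw [ENNReal.tsum_mul_left]

/-- Key inequality: if `Jst` is dominated by the total `f`-cost of every policy,
then its expectation at time `n` is dominated by the expected tail cost. -/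
lemma key_le {U : S → Set C} (q : S → C → S → ℝ≥0∞) {π : Policy S C}
    (hπ : IsPolicy U π) (x : S) (f : S → C → ℝ≥0∞) (Jst : S → ℝ≥0∞)
    (hJst : ∀ π' : Policy S C, IsPolicy U π' → ∀ z : S,
      Jst z ≤ ∑' k : ℕ, costAt q π' z k f) (n : ℕ) :
    (∑' y : S, sDist q π x n y * Jst y) ≤ ∑' k : ℕ, costAt q π x (n + k) f := by
  rw [tail_decomp]
  calc (∑' y : S, sDist q π x n y * Jst y)
      = ∑' (y : S) (l₂ : {l : List (S × C) // l.length = n}),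
          histProb q π x l₂.1 y * Jst y := by
        refine tsum_congr fun y => ?_
        rw [sDist, ENNReal.tsum_mul_right]
    _ = ∑' (l₂ : {l : List (S × C) // l.length = n}) (y : S),
          histProb q π x l₂.1 y * Jst y := ENNReal.tsum_comm
    _ ≤ _ := by
        refine ENNReal.tsum_le_tsum fun l₂ => ENNReal.tsum_le_tsum fun z => ?_
        exact mul_le_mul_right (hJst (shift π l₂.1) (isPolicy_shift hπ l₂.1) z) _

/-- if `J_π(x) < +∞`, then `E^π_x[J^{*+}(x_n)] → 0` and
`E^π_x[J^{*-}(x_n)] → 0`. -/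
theorem expected_optimal_parts_tendsto_zero {S C : Type} [Countable S] [Countable C]
    (U : S → Set C) (q : S → C → S → ℝ≥0∞) (g : S → C → EReal)
    (hU : ∀ x, (U x).Nonempty)
    (hg : ∀ x, ∀ u ∈ U x, g x u ≠ ⊥)
    (hq : ∀ x, ∀ u ∈ U x, (∑' x' : S, q x u x') = 1)
    (hGC : GC U q g)
    (x : S) (π : Policy S C) (hπ : IsPolicy U π) (hfin : Jpol q g π x < ⊤) :
    Filter.Tendsto (fun n : ℕ => ∑' y : S, sDist q π x n y * JstarPlus U q g y)
      Filter.atTop (nhds 0) ∧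
    Filter.Tendsto (fun n : ℕ => ∑' y : S, sDist q π x n y * JstarMinus U q g y)
      Filter.atTop (nhds 0) := by
  have hP : Jplus q g π x ≠ ⊤ := by
    intro h
    rw [Jpol, signedSum, if_pos h] at hfin
    exact absurd hfin (lt_irrefl _)
  have hN : Jminus q g π x ≠ ⊤ := by
    refine ne_top_of_le_ne_top (hGC x) ?_
    exact le_biSup (fun π' => Jminus q g π' x) hπ
  have tail_tendsto : ∀ f : S → C → ℝ≥0∞, (∑' m : ℕ, costAt q π x m f) ≠ ⊤ →
      Filter.Tendsto (fun n : ℕ => ∑' k : ℕ, costAt q π x (n + k) f)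
        Filter.atTop (nhds 0) := by
    intro f hf
    have h := ENNReal.tendsto_sum_nat_add (fun m => costAt q π x m f) hf
    have heq : (fun n : ℕ => ∑' k : ℕ, costAt q π x (n + k) f)
        = fun n : ℕ => ∑' k : ℕ, costAt q π x (k + n) f := by
      funext n
      exact tsum_congr fun k => by rw [add_comm]
    rw [heq]
    exact h
  have squeeze : ∀ (f : S → C → ℝ≥0∞) (Jst : S → ℝ≥0∞),
      (∀ π' : Policy S C, IsPolicy U π' → ∀ z : S,
        Jst z ≤ ∑' k : ℕ, costAt q π' z k f) →
      (∑' m : ℕ, costAt q π x m f) ≠ ⊤ →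
      Filter.Tendsto (fun n : ℕ => ∑' y : S, sDist q π x n y * Jst y)
        Filter.atTop (nhds 0) := by
    intro f Jst hJst hf
    refine tendsto_of_tendsto_of_tendsto_of_le_of_le tendsto_const_nhds
      (tail_tendsto f hf) (fun n => zero_le) (fun n => key_le q hπ x f Jst hJst n)
  constructor
  · refine squeeze (gPos g) (JstarPlus U q g) ?_ hP
    intro π' hπ' z
    exact biInf_le (fun π'' => Jplus q g π'' z) hπ'
  · refine squeeze (gNeg g) (JstarMinus U q g) ?_ hN
    intro π' hπ' z
    exact biInf_le (fun π'' => Jminus q g π'' z) hπ'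

end GCMDP

end
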